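/- The MPCP function ψ_{τ,p} is subadditive on the nonnegative reals: for all x₁ ≥ 0 and x₂ ≥ 0, ψ_{τ,p}(x₁ + x₂) ≤ ψ_{τ,p}(x₁) + ψ_{τ,p}(x₂). -/

import Mathlib

noncomputable def psi (τ p : ℝ) (x : ℝ) : ℝ :=
  if |x| ≤ τ ^ (1 / p) then |x| - |x| ^ (1 + p) / ((1 + p) * τ)
  else p * τ ^ (1 / p) / (1 + p)

lemma rpow_superadd {x y q : ℝ} (hx : 0 ≤ x) (hy : 0 ≤ y) (hq : 1 ≤ q) :
    x ^ q + y ^ q ≤ (x + y) ^ q := by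
  rcases eq_or_lt_of_le (add_nonneg hx hy) with h | h
  · have hx0 : x = 0 := by linarith
    have hy0 : y = 0 := by linarith
    simp [hx0, hy0, Real.zero_rpow (by linarith : q ≠ 0)]
  · have hsplit : ∀ z : ℝ, 0 ≤ z → z ^ q = z * z ^ (q - 1) := by
      intro z hz
      have : z ^ ((1 : ℝ) + (q - 1)) = z ^ (1 : ℝ) * z ^ (q - 1) :=
        Real.rpow_add' hz (by linarith)
      simpa [Real.rpow_one] using this
    rw [hsplit x hx, hsplit y hy, hsplit (x + y) (by linarith)]
    have hxle : x ^ (q - 1) ≤ (x + y) ^ (q - 1) :=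
      Real.rpow_le_rpow hx (by linarith) (by linarith)
    have hyle : y ^ (q - 1) ≤ (x + y) ^ (q - 1) :=
      Real.rpow_le_rpow hy (by linarith) (by linarith)
    nlinarith [hxle, hyle, hx, hy]

theorem mpcp_subadditive (τ p : ℝ) (hτ : 1 < τ) (hp0 : 0 < p) (hp1 : p < 1) :
    ∀ x₁ x₂ : ℝ, 0 ≤ x₁ → 0 ≤ x₂ →
      psi τ p (x₁ + x₂) ≤ psi τ p x₁ + psi τ p x₂ := by
  intro x y hx hy
  have hp1' : (0:ℝ) < 1 + p := by linarith
  have hτ0 : (0:ℝ) < τ := by linarith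
  have hc : (0:ℝ) < (1 + p) * τ := by positivity
  set T := τ ^ (1 / p) with hTdef
  have hT0 : 0 < T := Real.rpow_pos_of_pos hτ0 _
  have hTp : T ^ p = τ := by
    rw [hTdef, ← Real.rpow_mul hτ0.le, one_div_mul_cancel hp0.ne', Real.rpow_one]
  -- key bound: for 0 ≤ z ≤ T, z^(1+p) ≤ τ * z
  have key : ∀ z : ℝ, 0 ≤ z → z ≤ T → z ^ (1 + p) ≤ τ * z := by
    intro z hz hzT
    have h1 : z ^ ((1:ℝ) + p) = z ^ (1:ℝ) * z ^ p :=
      Real.rpow_add' hz (by linarith)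
    have h2 : z ^ p ≤ τ := by
      rw [← hTp]; exact Real.rpow_le_rpow hz hzT hp0.le
    rw [h1, Real.rpow_one]
    nlinarith
  have hT1p : T ^ (1 + p) = τ * T := key T hT0.le le_rfl |>.antisymm (by
    have h1 : T ^ ((1:ℝ) + p) = T ^ (1:ℝ) * T ^ p :=
      Real.rpow_add' hT0.le (by linarith)
    rw [h1, Real.rpow_one, hTp]; nlinarith)
  have hpsi_le : ∀ z : ℝ, 0 ≤ z → z ≤ T →
      psi τ p z = z - z ^ (1 + p) / ((1 + p) * τ) := by
    intro z hz hzT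
    unfold psi
    rw [abs_of_nonneg hz, if_pos hzT]
  have hpsi_gt : ∀ z : ℝ, 0 ≤ z → T < z → psi τ p z = p * T / (1 + p) := by
    intro z hz hzT
    unfold psi
    rw [abs_of_nonneg hz, if_neg (not_le.mpr hzT)]
  have hnn : ∀ z : ℝ, 0 ≤ z → 0 ≤ psi τ p z := by
    intro z hz
    by_cases hzT : z ≤ T
    · rw [hpsi_le z hz hzT]
      have := key z hz hzT
      rw [sub_nonneg, div_le_iff₀ hc]
      nlinarith [mul_nonneg (mul_nonneg hp0.le hz) hτ0.le]
    · rw [hpsi_gt z hz (not_le.mp hzT)]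
      positivity
  have hxy : (0:ℝ) ≤ x + y := by linarith
  by_cases hs : x + y ≤ T
  · have hxT : x ≤ T := by linarith
    have hyT : y ≤ T := by linarith
    rw [hpsi_le _ hxy hs, hpsi_le _ hx hxT, hpsi_le _ hy hyT]
    have hsup : x ^ (1 + p) + y ^ (1 + p) ≤ (x + y) ^ (1 + p) :=
      rpow_superadd hx hy (by linarith)
    have h3 : x ^ (1 + p) / ((1 + p) * τ) + y ^ (1 + p) / ((1 + p) * τ)
        ≤ (x + y) ^ (1 + p) / ((1 + p) * τ) := by
      rw [← add_div]
      gcongr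
    linarith
  · have hsT : T < x + y := not_le.mp hs
    rw [hpsi_gt _ hxy hsT]
    by_cases hxT : x ≤ T
    · by_cases hyT : y ≤ T
      · rw [hpsi_le _ hx hxT, hpsi_le _ hy hyT]
        have k1 := key x hx hxT
        have k2 := key y hy hyT
        have e1 : x ^ (1 + p) / ((1 + p) * τ) ≤ x / (1 + p) := by
          rw [div_le_div_iff₀ hc hp1']; nlinarith
        have e2 : y ^ (1 + p) / ((1 + p) * τ) ≤ y / (1 + p) := by
          rw [div_le_div_iff₀ hc hp1']; nlinarith
        have e3 : p * T / (1 + p) ≤ p * (x + y) / (1 + p) := by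
          gcongr
        have e4 : p * (x + y) / (1 + p) = (x + y) - (x + y) / (1 + p) := by
          field_simp; ring
        have e5 : x / (1 + p) + y / (1 + p) = (x + y) / (1 + p) := by ring
        linarith
      · rw [hpsi_gt _ hy (not_le.mp hyT)]
        have := hnn x hx
        linarith
    · rw [hpsi_gt _ hx (not_le.mp hxT)]
      have := hnn y hy
      linarith
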